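/- If φ : [a,b] → ℝ is ACG* on [a,b], then φ is differentiable almost everywhere on [a,b] (with respect to Lebesgue measure). -/

import Mathlib

open Filter Set Topology MeasureTheory

/-- Lower right Dini derivative of a real-valued function. -/
noncomputable def DlowR (φ : ℝ → ℝ) (t : ℝ) : EReal :=
  Filter.liminf (fun s : ℝ => (((φ (t + s) - φ t) / s : ℝ) : EReal))
    (nhdsWithin 0 (Set.Ioi 0))

/-- Oscillation of `φ` on the interval `[c,d]`. -/
noncomputable def osc (φ : ℝ → ℝ) (c d : ℝ) : ℝ :=
  sSup {r | ∃ x y : ℝ, c ≤ x ∧ x ≤ y ∧ y ≤ d ∧ r = |φ y - φ x|}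

/-- A finite family of intervals `[c i, d i]` is non-overlapping with endpoints in `S`. -/
def GoodIntervals (S : Set ℝ) {n : ℕ} (c d : Fin n → ℝ) : Prop :=
  (∀ i, c i ∈ S ∧ d i ∈ S ∧ c i ≤ d i) ∧
    Pairwise fun i j => d i ≤ c j ∨ d j ≤ c i

/-- `φ` is absolutely continuous (AC) on `S`. -/
def FnAC (φ : ℝ → ℝ) (S : Set ℝ) : Prop :=
  ∀ ε > 0, ∃ δ > 0, ∀ (n : ℕ) (c d : Fin n → ℝ),
    GoodIntervals S c d → (∑ i, (d i - c i)) < δ →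
      (∑ i, |φ (d i) - φ (c i)|) < ε

/-- `φ` is absolutely continuous in the restricted sense (AC*) on `S`. -/
def FnACstar (φ : ℝ → ℝ) (S : Set ℝ) : Prop :=
  ∀ ε > 0, ∃ δ > 0, ∀ (n : ℕ) (c d : Fin n → ℝ),
    GoodIntervals S c d → (∑ i, (d i - c i)) < δ →
      (∑ i, osc φ (c i) (d i)) < ε

/-- `φ` is generalized absolutely continuous (ACG) on `[a,b]`. -/
def FnACG (φ : ℝ → ℝ) (a b : ℝ) : Prop :=
  ContinuousOn φ (Set.Icc a b) ∧
    ∃ S : ℕ → Set ℝ, (⋃ n, S n) = Set.Icc a b ∧ ∀ n, FnAC φ (S n)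

/-- `φ` is generalized absolutely continuous in the restricted sense (ACG*) on `[a,b]`. -/
def FnACGstar (φ : ℝ → ℝ) (a b : ℝ) : Prop :=
  ContinuousOn φ (Set.Icc a b) ∧
    ∃ S : ℕ → Set ℝ, (⋃ n, S n) = Set.Icc a b ∧ ∀ n, FnACstar φ (S n)

/-- `f` has Henstock–Kurzweil integral `I` on `[a,b]`. -/
def HasHKIntegral (f : ℝ → ℝ) (a b I : ℝ) : Prop :=
  ∀ ε > 0, ∃ δ : ℝ → ℝ, (∀ t ∈ Set.Icc a b, 0 < δ t) ∧
    ∀ (n : ℕ) (x : Fin (n + 1) → ℝ) (t : Fin n → ℝ),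
      Monotone x → x 0 = a → x (Fin.last n) = b →
      (∀ i : Fin n, t i ∈ Set.Icc (x i.castSucc) (x i.succ)) →
      (∀ i : Fin n, x i.succ - x i.castSucc < δ (t i)) →
      |(∑ i : Fin n, f (t i) * (x i.succ - x i.castSucc)) - I| < ε

section Proofs

section OscLemmas

variable {φ : ℝ → ℝ} {a b c d : ℝ} {C : ℝ}

lemma oscSet_nonempty (hcd : c ≤ d) :
    {r | ∃ x y : ℝ, c ≤ x ∧ x ≤ y ∧ y ≤ d ∧ r = |φ y - φ x|}.Nonempty :=
  ⟨|φ c - φ c|, c, c, le_rfl, le_rfl, hcd, rfl⟩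

lemma oscSet_bddAbove (hC : ∀ x ∈ Icc a b, |φ x| ≤ C) (hsub : Icc c d ⊆ Icc a b) :
    BddAbove {r | ∃ x y : ℝ, c ≤ x ∧ x ≤ y ∧ y ≤ d ∧ r = |φ y - φ x|} := by
  refine ⟨2 * C, ?_⟩
  rintro r ⟨x, y, hcx, hxy, hyd, rfl⟩
  have hx : x ∈ Icc a b := hsub ⟨hcx, hxy.trans hyd⟩
  have hy : y ∈ Icc a b := hsub ⟨hcx.trans hxy, hyd⟩
  calc |φ y - φ x| ≤ |φ y| + |φ x| := abs_sub _ _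
    _ ≤ C + C := add_le_add (hC y hy) (hC x hx)
    _ = 2 * C := by ring

lemma abs_le_osc (hC : ∀ x ∈ Icc a b, |φ x| ≤ C) (hsub : Icc c d ⊆ Icc a b)
    {x y : ℝ} (hcx : c ≤ x) (hxy : x ≤ y) (hyd : y ≤ d) :
    |φ y - φ x| ≤ osc φ c d :=
  le_csSup (oscSet_bddAbove hC hsub) ⟨x, y, hcx, hxy, hyd, rfl⟩

lemma osc_nonneg (hC : ∀ x ∈ Icc a b, |φ x| ≤ C) (hsub : Icc c d ⊆ Icc a b) (hcd : c ≤ d) :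
    0 ≤ osc φ c d := by
  have := abs_le_osc hC hsub (le_refl c) (le_refl c) hcd
  exact le_trans (abs_nonneg _) this

lemma osc_le {B : ℝ} (hcd : c ≤ d)
    (hB : ∀ x y : ℝ, c ≤ x → x ≤ y → y ≤ d → |φ y - φ x| ≤ B) :
    osc φ c d ≤ B := by
  refine csSup_le (oscSet_nonempty hcd) ?_
  rintro r ⟨x, y, hcx, hxy, hyd, rfl⟩
  exact hB x y hcx hxy hyd

lemma osc_mono (hC : ∀ x ∈ Icc a b, |φ x| ≤ C) {c' d' : ℝ} (hsub : Icc c' d' ⊆ Icc a b)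
    (h1 : c' ≤ c) (hcd : c ≤ d) (h2 : d ≤ d') :
    osc φ c d ≤ osc φ c' d' := by
  refine osc_le hcd fun x y hcx hxy hyd => ?_
  exact abs_le_osc hC hsub (h1.trans hcx) hxy (hyd.trans h2)

lemma osc_split (hC : ∀ x ∈ Icc a b, |φ x| ≤ C) (hsub : Icc c d ⊆ Icc a b)
    {m : ℝ} (h1 : c ≤ m) (h2 : m ≤ d) :
    osc φ c d ≤ osc φ c m + osc φ m d := by
  have hsub1 : Icc c m ⊆ Icc a b := (Icc_subset_Icc le_rfl h2).trans hsub
  have hsub2 : Icc m d ⊆ Icc a b := (Icc_subset_Icc h1 le_rfl).trans hsub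
  refine osc_le (h1.trans h2) fun x y hcx hxy hyd => ?_
  rcases le_total y m with hym | hmy
  · have := abs_le_osc hC hsub1 hcx hxy hym
    have h0 : 0 ≤ osc φ m d := osc_nonneg hC hsub2 h2
    linarith
  rcases le_total m x with hmx | hxm
  · have := abs_le_osc hC hsub2 hmx hxy hyd
    have h0 : 0 ≤ osc φ c m := osc_nonneg hC hsub1 h1
    linarith
  · have e1 := abs_le_osc hC hsub1 hcx hxm le_rfl
    have e2 := abs_le_osc hC hsub2 le_rfl hmy hyd
    calc |φ y - φ x| = |(φ y - φ m) + (φ m - φ x)| := by ring_nf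
      _ ≤ |φ y - φ m| + |φ m - φ x| := abs_add_le _ _
      _ ≤ osc φ m d + osc φ c m := add_le_add e2 e1
      _ = osc φ c m + osc φ m d := by ring

lemma osc_small (hφ : ContinuousOn φ (Icc a b)) :
    ∀ ε > (0:ℝ), ∃ η > (0:ℝ), ∀ c d : ℝ, a ≤ c → c ≤ d → d ≤ b → d - c ≤ η →
      osc φ c d ≤ ε := by
  intro ε hε
  have hu : UniformContinuousOn φ (Icc a b) :=
    isCompact_Icc.uniformContinuousOn_of_continuous hφ
  rw [Metric.uniformContinuousOn_iff] at hu
  obtain ⟨δ, hδ, hd⟩ := hu ε hε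
  refine ⟨δ / 2, by positivity, fun c d hac hcd hdb hlen => ?_⟩
  refine osc_le hcd fun x y hcx hxy hyd => ?_
  have hx : x ∈ Icc a b := ⟨hac.trans hcx, (hxy.trans hyd).trans hdb⟩
  have hy : y ∈ Icc a b := ⟨hac.trans (hcx.trans hxy), hyd.trans hdb⟩
  have hdist : dist y x < δ := by
    rw [Real.dist_eq]
    have : |y - x| ≤ d - c := by
      rw [abs_le]; constructor <;> linarith
    linarith
  have := hd y hy x hx hdist
  rw [Real.dist_eq] at this
  exact this.le
end OscLemmas

lemma sum_len_le {n : ℕ} {c d : Fin n → ℝ} {u v : ℝ} (huv : u ≤ v)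
    (hle : ∀ i, c i ≤ d i)
    (hpair : Pairwise fun i j => d i ≤ c j ∨ d j ≤ c i)
    (hsub : ∀ i, u ≤ c i ∧ d i ≤ v) :
    (∑ i, (d i - c i)) ≤ v - u := by
  have hdisj : Set.PairwiseDisjoint (Finset.univ : Finset (Fin n))
      (fun i => Set.Ioc (c i) (d i)) := by
    intro i _ j _ hij
    have h := hpair hij
    rw [Function.onFun, Set.Ioc_disjoint_Ioc]
    rcases h with h | h
    · exact le_trans (min_le_left _ _) (h.trans (le_max_right _ _))
    · exact le_trans (min_le_right _ _) (h.trans (le_max_left _ _))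
  have hmeas : ∀ i : Fin n, MeasurableSet (Set.Ioc (c i) (d i)) :=
    fun i => measurableSet_Ioc
  have hunion : volume (⋃ i ∈ (Finset.univ : Finset (Fin n)), Set.Ioc (c i) (d i))
      = ∑ i, volume (Set.Ioc (c i) (d i)) :=
    measure_biUnion_finset hdisj (fun i _ => hmeas i)
  have hsubU : (⋃ i ∈ (Finset.univ : Finset (Fin n)), Set.Ioc (c i) (d i)) ⊆ Set.Ioc u v := by
    intro x hx
    simp only [Set.mem_iUnion] at hx
    obtain ⟨i, _, hx⟩ := hx
    exact ⟨lt_of_le_of_lt (hsub i).1 hx.1, hx.2.trans (hsub i).2⟩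
  have hle2 : (∑ i, volume (Set.Ioc (c i) (d i))) ≤ volume (Set.Ioc u v) := by
    rw [← hunion]; exact measure_mono hsubU
  have hvol : ∀ i, volume (Set.Ioc (c i) (d i)) = ENNReal.ofReal (d i - c i) :=
    fun i => Real.volume_Ioc
  rw [Real.volume_Ioc] at hle2
  simp only [hvol] at hle2
  rw [← ENNReal.ofReal_sum_of_nonneg (fun i _ => sub_nonneg.2 (hle i))] at hle2
  exact (ENNReal.ofReal_le_ofReal_iff (by linarith)).1 hle2

lemma subfamily_exists {n : ℕ} (T : Finset (Fin n)) :
    ∃ (m : ℕ) (e : Fin m → Fin n), Function.Injective e ∧ (∀ j, e j ∈ T) ∧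
      (∀ f : Fin n → ℝ, (∑ j, f (e j)) = ∑ i ∈ T, f i) := by
  refine ⟨T.card, fun j => (T.orderIsoOfFin rfl j : Fin n), ?_, ?_, ?_⟩
  · intro i j hij
    exact (T.orderIsoOfFin rfl).injective (Subtype.ext hij)
  · intro j; exact (T.orderIsoOfFin rfl j).2
  · intro f
    rw [← Finset.sum_attach T f]
    exact Fintype.sum_equiv (T.orderIsoOfFin rfl).toEquiv
      (fun j => f ((T.orderIsoOfFin rfl j : Fin n))) (fun i => f i) (fun j => rfl)

def MyVB (φ : ℝ → ℝ) (S : Set ℝ) (M : ℝ) : Prop :=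
  ∀ (n : ℕ) (c d : Fin n → ℝ), GoodIntervals S c d → (∑ i, osc φ (c i) (d i)) ≤ M

lemma vbstar_of_acstar {φ : ℝ → ℝ} {a b : ℝ} {E : Set ℝ} (hab : a ≤ b)
    (hφ : ContinuousOn φ (Icc a b)) (hE : E ⊆ Icc a b) (hAC : FnACstar φ E) :
    ∃ M, MyVB φ E M := by
  obtain ⟨C, hC⟩ := isCompact_Icc.exists_bound_of_continuousOn hφ
  simp only [Real.norm_eq_abs] at hC
  have hC0 : 0 ≤ C := le_trans (abs_nonneg _) (hC a ⟨le_rfl, hab⟩)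
  obtain ⟨δ, hδ, hAC1⟩ := hAC 1 one_pos
  set N : ℕ := ⌊(b - a) / (δ / 4)⌋₊ with hN
  refine ⟨(N + 1 : ℝ) + 4 * (b - a) / δ * (2 * C), ?_⟩
  intro n c d hgood
  have hmem : ∀ i, c i ∈ Icc a b ∧ d i ∈ Icc a b ∧ c i ≤ d i := by
    intro i; obtain ⟨h1, h2, h3⟩ := hgood.1 i
    exact ⟨hE h1, hE h2, h3⟩
  have hosc2C : ∀ i, osc φ (c i) (d i) ≤ 2 * C := by
    intro i
    refine osc_le (hmem i).2.2 fun x y hcx hxy hyd => ?_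
    have hx : x ∈ Icc a b := ⟨(hmem i).1.1.trans hcx, (hxy.trans hyd).trans (hmem i).2.1.2⟩
    have hy : y ∈ Icc a b := ⟨(hmem i).1.1.trans (hcx.trans hxy), hyd.trans (hmem i).2.1.2⟩
    calc |φ y - φ x| ≤ |φ y| + |φ x| := abs_sub _ _
      _ ≤ C + C := add_le_add (hC y hy) (hC x hx)
      _ = 2 * C := by ring
  classical
  set long : Finset (Fin n) := Finset.univ.filter (fun i => δ / 4 ≤ d i - c i) with hlong
  set short : Finset (Fin n) := Finset.univ.filter (fun i => ¬ (δ / 4 ≤ d i - c i)) with hshort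
  have hsplit : (∑ i, osc φ (c i) (d i)) =
      (∑ i ∈ long, osc φ (c i) (d i)) + ∑ i ∈ short, osc φ (c i) (d i) :=
    (Finset.sum_filter_add_sum_filter_not _ _ _).symm
  -- long intervals
  have hlensum : ∑ i ∈ long, (d i - c i) ≤ b - a := by
    have h1 : ∑ i ∈ long, (d i - c i) ≤ ∑ i, (d i - c i) :=
      Finset.sum_le_sum_of_subset_of_nonneg (Finset.subset_univ _)
        (fun i _ _ => sub_nonneg.2 (hmem i).2.2)
    have h2 : (∑ i, (d i - c i)) ≤ b - a :=
      sum_len_le hab (fun i => (hmem i).2.2) hgood.2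
        (fun i => ⟨(hmem i).1.1, (hmem i).2.1.2⟩)
    linarith
  have hcardlong : (long.card : ℝ) * (δ / 4) ≤ b - a := by
    have := Finset.card_nsmul_le_sum long (fun i => d i - c i) (δ / 4)
      (fun i hi => (Finset.mem_filter.1 hi).2)
    rw [nsmul_eq_mul] at this
    linarith
  have hlongsum : ∑ i ∈ long, osc φ (c i) (d i) ≤ 4 * (b - a) / δ * (2 * C) := by
    have h1 : ∑ i ∈ long, osc φ (c i) (d i) ≤ (long.card : ℝ) * (2 * C) := by
      have := Finset.sum_le_card_nsmul long (fun i => osc φ (c i) (d i)) (2 * C)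
        (fun i _ => hosc2C i)
      rwa [nsmul_eq_mul] at this
    have h2 : (long.card : ℝ) ≤ 4 * (b - a) / δ := by
      rw [le_div_iff₀ hδ]
      nlinarith
    nlinarith
  -- short intervals
  set bucket : Fin n → ℕ := fun i => ⌊(c i - a) / (δ / 4)⌋₊ with hbucket
  have hmaps : ∀ i ∈ short, bucket i ∈ Finset.range (N + 1) := by
    intro i _
    rw [Finset.mem_range, Nat.lt_succ_iff]
    apply Nat.floor_le_floor
    have h1 : c i - a ≤ b - a := by have := (hmem i).1.2; linarith
    exact div_le_div_of_nonneg_right h1 (by positivity) |>.trans_eq rfl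
  have hfiber : ∑ k ∈ Finset.range (N + 1), ∑ i ∈ short.filter (fun i => bucket i = k),
      osc φ (c i) (d i) = ∑ i ∈ short, osc φ (c i) (d i) :=
    Finset.sum_fiberwise_of_maps_to hmaps _
  have hbucketsum : ∀ k, ∑ i ∈ short.filter (fun i => bucket i = k),
      osc φ (c i) (d i) ≤ 1 := by
    intro k
    obtain ⟨m, e, hinj, hmemT, hsum⟩ := subfamily_exists (short.filter (fun i => bucket i = k))
    have hTprop : ∀ j, ¬ (δ / 4 ≤ d (e j) - c (e j)) ∧ bucket (e j) = k := by
      intro j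
      have := hmemT j
      rw [Finset.mem_filter] at this
      exact ⟨(Finset.mem_filter.1 this.1).2, this.2⟩
    have hgood' : GoodIntervals E (c ∘ e) (d ∘ e) :=
      ⟨fun j => hgood.1 (e j), fun i j hij => hgood.2 (fun h => hij (hinj h))⟩
    have hsubj : ∀ j, a + k * (δ / 4) ≤ c (e j) ∧ d (e j) ≤ a + (k + 2) * (δ / 4) := by
      intro j
      have hnn : (0:ℝ) ≤ (c (e j) - a) / (δ / 4) :=
        div_nonneg (by linarith [(hmem (e j)).1.1]) (by positivity)
      constructor
      · have hk : (k : ℝ) ≤ (c (e j) - a) / (δ / 4) := by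
          rw [← (hTprop j).2]
          exact Nat.floor_le hnn
        rw [le_div_iff₀ (by positivity)] at hk
        linarith
      · have hk : (c (e j) - a) / (δ / 4) < (k : ℝ) + 1 := by
          rw [← (hTprop j).2]
          exact Nat.lt_floor_add_one _
        have h2 : c (e j) - a < ((k : ℝ) + 1) * (δ / 4) := by
          rw [div_lt_iff₀ (by positivity)] at hk; linarith
        have h3 : d (e j) - c (e j) < δ / 4 := not_le.1 (hTprop j).1
        nlinarith
    have hlen' : (∑ j, (d (e j) - c (e j))) ≤ δ / 2 := by
      have := sum_len_le (u := a + k * (δ / 4)) (v := a + (k + 2) * (δ / 4))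
        (by nlinarith) (fun j => (hmem (e j)).2.2)
        (fun i j hij => hgood.2 (fun h => hij (hinj h))) hsubj
      linarith
    have := hAC1 m (c ∘ e) (d ∘ e) hgood' (by
      simp only [Function.comp]
      calc (∑ j, (d (e j) - c (e j))) ≤ δ / 2 := hlen'
        _ < δ := by linarith)
    have h2 := hsum (fun i => osc φ (c i) (d i))
    rw [← h2]
    exact le_of_lt (by simpa using this)
  have hshortsum : ∑ i ∈ short, osc φ (c i) (d i) ≤ (N + 1 : ℝ) := by
    rw [← hfiber]
    calc ∑ k ∈ Finset.range (N + 1), ∑ i ∈ short.filter (fun i => bucket i = k),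
        osc φ (c i) (d i) ≤ ∑ k ∈ Finset.range (N + 1), 1 :=
          Finset.sum_le_sum (fun k _ => hbucketsum k)
      _ = (N + 1 : ℝ) := by simp
  linarith

lemma vbstar_closure {φ : ℝ → ℝ} {a b M : ℝ} {E : Set ℝ} (hab : a ≤ b)
    (hφ : ContinuousOn φ (Icc a b)) (hE : E ⊆ Icc a b) (hM : MyVB φ E M) :
    MyVB φ (closure E) M := by
  classical
  obtain ⟨C, hC⟩ := isCompact_Icc.exists_bound_of_continuousOn hφ
  simp only [Real.norm_eq_abs] at hC
  have hKsub : closure E ⊆ Icc a b := closure_minimal hE isClosed_Icc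
  intro n c d hgood
  refine le_of_forall_pos_le_add fun ε hε => ?_
  set ε' : ℝ := ε / (2 * n + 1) with hε'def
  have hε' : 0 < ε' := by positivity
  clear_value ε'
  obtain ⟨η, hη, hosc⟩ := osc_small hφ ε' hε'
  set V : Finset ℝ := (Finset.univ.image c) ∪ (Finset.univ.image d) with hV
  set P : Finset (ℝ × ℝ) := (V ×ˢ V).filter (fun p => p.1 < p.2) with hP
  set Δ : ℝ := if h : P.Nonempty then P.inf' h (fun p => p.2 - p.1) else 1 with hΔdef
  have hΔ : 0 < Δ := by
    rw [hΔdef]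
    split_ifs with h
    · rw [Finset.lt_inf'_iff]
      rintro ⟨v, w⟩ hvw
      have := (Finset.mem_filter.1 hvw).2
      simp only at this
      linarith
    · exact one_pos
  have hΔle : ∀ v w : ℝ, v ∈ V → w ∈ V → v < w → Δ ≤ w - v := by
    intro v w hv hw hvw
    have hmem : (v, w) ∈ P := Finset.mem_filter.2 ⟨Finset.mem_product.2 ⟨hv, hw⟩, hvw⟩
    have hne : P.Nonempty := ⟨_, hmem⟩
    rw [hΔdef, dif_pos hne]
    exact Finset.inf'_le _ hmem
  set η₂ : ℝ := min η (Δ / 3) with hη₂def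
  have hη₂ : 0 < η₂ := lt_min hη (by positivity)
  have hη₂η : η₂ ≤ η := min_le_left _ _
  have hη₂Δ : η₂ ≤ Δ / 3 := min_le_right _ _
  set ρ : ℝ → ℝ := fun v => if hv : (E ∩ Metric.ball v η₂).Nonempty then hv.choose else v
    with hρdef
  have hρE : ∀ v ∈ closure E, ρ v ∈ E ∧ |ρ v - v| < η₂ := by
    intro v hv
    have hne : (E ∩ Metric.ball v η₂).Nonempty := by
      rw [Metric.mem_closure_iff] at hv
      obtain ⟨y, hyE, hyd⟩ := hv η₂ hη₂
      exact ⟨y, hyE, by rwa [Metric.mem_ball, dist_comm]⟩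
    have hch := hne.choose_spec
    rw [hρdef]
    simp only [dif_pos hne]
    refine ⟨hch.1, ?_⟩
    have := hch.2
    rwa [Metric.mem_ball, Real.dist_eq] at this
  clear_value ρ
  have hVc : ∀ i, c i ∈ V := fun i => Finset.mem_union_left _
    (Finset.mem_image.2 ⟨i, Finset.mem_univ i, rfl⟩)
  have hVd : ∀ i, d i ∈ V := fun i => Finset.mem_union_right _
    (Finset.mem_image.2 ⟨i, Finset.mem_univ i, rfl⟩)
  have hρlt : ∀ v w : ℝ, v ∈ V → w ∈ V → v ∈ closure E → w ∈ closure E → v < w →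
      ρ v < ρ w := by
    intro v w hv hw hvE hwE hvw
    have h1 := (hρE v hvE).2
    have h2 := (hρE w hwE).2
    have h3 := hΔle v w hv hw hvw
    rw [abs_lt] at h1 h2
    have h4 := hη₂Δ
    linarith
  clear_value Δ η₂
  set c' : Fin n → ℝ := fun i => ρ (c i) with hc'
  set d' : Fin n → ℝ := fun i => ρ (d i) with hd'
  have hmemc : ∀ i, c i ∈ closure E := fun i => (hgood.1 i).1
  have hmemd : ∀ i, d i ∈ closure E := fun i => (hgood.1 i).2.1
  have hcd : ∀ i, c i ≤ d i := fun i => (hgood.1 i).2.2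
  have hc'd' : ∀ i, c' i ≤ d' i := by
    intro i
    rcases eq_or_lt_of_le (hcd i) with h | h
    · simp [hc', hd', h]
    · exact (hρlt _ _ (hVc i) (hVd i) (hmemc i) (hmemd i) h).le
  have hgood' : GoodIntervals E c' d' := by
    constructor
    · intro i
      exact ⟨(hρE _ (hmemc i)).1, (hρE _ (hmemd i)).1, hc'd' i⟩
    · intro i j hij
      rcases hgood.2 hij with h | h
      · left
        rcases eq_or_lt_of_le h with h2 | h2
        · show ρ (d i) ≤ ρ (c j); rw [h2]
        · exact (hρlt _ _ (hVd i) (hVc j) (hmemd i) (hmemc j) h2).le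
      · right
        rcases eq_or_lt_of_le h with h2 | h2
        · show ρ (d j) ≤ ρ (c i); rw [h2]
        · exact (hρlt _ _ (hVd j) (hVc i) (hmemd j) (hmemc i) h2).le
  have key : ∀ i, osc φ (c i) (d i) ≤ osc φ (c' i) (d' i) + 2 * ε' := by
    intro i
    set u : ℝ := min (c i) (c' i) with hu
    set v : ℝ := max (d i) (d' i) with hv2
    have hcI : c i ∈ Icc a b := hKsub (hmemc i)
    have hdI : d i ∈ Icc a b := hKsub (hmemd i)
    have hc'I : c' i ∈ Icc a b := hE (hρE _ (hmemc i)).1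
    have hd'I : d' i ∈ Icc a b := hE (hρE _ (hmemd i)).1
    have huI : u ∈ Icc a b := ⟨le_min hcI.1 hc'I.1, (min_le_left _ _).trans hcI.2⟩
    have hvI : v ∈ Icc a b := ⟨hdI.1.trans (le_max_left _ _), max_le hdI.2 hd'I.2⟩
    have hsubuv : Icc u v ⊆ Icc a b := Icc_subset_Icc huI.1 hvI.2
    have huc' : u ≤ c' i := min_le_right _ _
    have hd'v : d' i ≤ v := le_max_right _ _
    have h1 : osc φ (c i) (d i) ≤ osc φ u v :=
      osc_mono hC hsubuv (min_le_left _ _) (hcd i) (le_max_left _ _)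
    have h2 : osc φ u v ≤ osc φ u (c' i) + osc φ (c' i) v :=
      osc_split hC hsubuv huc' ((hc'd' i).trans hd'v)
    have h3 : osc φ (c' i) v ≤ osc φ (c' i) (d' i) + osc φ (d' i) v :=
      osc_split hC (Icc_subset_Icc hc'I.1 hvI.2) (hc'd' i) hd'v
    have h4 : osc φ u (c' i) ≤ ε' := by
      refine hosc u (c' i) huI.1 huc' hc'I.2 ?_
      have := (hρE _ (hmemc i)).2
      rw [abs_lt] at this
      have h5 : η₂ ≤ η := hη₂η
      rcases le_total (c i) (c' i) with h6 | h6
      · rw [hu, min_eq_left h6]; linarith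
      · rw [hu, min_eq_right h6]; linarith
    have h5 : osc φ (d' i) v ≤ ε' := by
      refine hosc (d' i) v hd'I.1 hd'v hvI.2 ?_
      have := (hρE _ (hmemd i)).2
      rw [abs_lt] at this
      have h5 : η₂ ≤ η := hη₂η
      rcases le_total (d i) (d' i) with h6 | h6
      · rw [hv2, max_eq_right h6]; linarith
      · rw [hv2, max_eq_left h6]; linarith
    linarith
  calc (∑ i, osc φ (c i) (d i)) ≤ ∑ i, (osc φ (c' i) (d' i) + 2 * ε') :=
        Finset.sum_le_sum fun i _ => key i
    _ = (∑ i, osc φ (c' i) (d' i)) + n * (2 * ε') := by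
        rw [Finset.sum_add_distrib, Finset.sum_const, Finset.card_univ,
          Fintype.card_fin, nsmul_eq_mul]
    _ ≤ M + n * (2 * ε') := by
        have := hM n c' d' hgood'
        linarith
    _ ≤ M + ε := by
        have h2 : (0:ℝ) < 2 * n + 1 := by positivity
        have h1 : (n : ℝ) * (2 * ε') ≤ ε := by
          rw [hε'def]
          clear hε'
          rw [show (n : ℝ) * (2 * (ε / (2 * n + 1))) = (2 * n) * ε / (2 * n + 1) by ring]
          rw [div_le_iff₀ h2]
          nlinarith
        linarith

lemma bad_null (Γ : Set (ℝ × ℝ)) (hcount : Γ.Countable) (w : ℝ × ℝ → ℝ)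
    (hw : ∀ p ∈ Γ, 0 ≤ w p) (M₂ : ℝ)
    (hbd : ∀ F : Finset (ℝ × ℝ), ↑F ⊆ Γ → (∑ p ∈ F, w p) ≤ M₂)
    {ε : ℝ} (hε : 0 < ε) :
    volume {t : ℝ | ∀ r > 0, ∃ p ∈ Γ,
      (p.1 ∈ Ioo t (t + r) ∧ ε * (p.1 - t) < w p) ∨
      (p.2 ∈ Ioo (t - r) t ∧ ε * (t - p.2) < w p)} = 0 := by
  classical
  set Bad := {t : ℝ | ∀ r > 0, ∃ p ∈ Γ,
      (p.1 ∈ Ioo t (t + r) ∧ ε * (p.1 - t) < w p) ∨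
      (p.2 ∈ Ioo (t - r) t ∧ ε * (t - p.2) < w p)} with hBad
  have key : ∀ η > (0:ℝ), volume Bad ≤ ENNReal.ofReal (2 * η / ε) := by
    intro η hη
    set PS := {s : ℝ | ∃ F : Finset (ℝ × ℝ), ↑F ⊆ Γ ∧ s = ∑ p ∈ F, w p} with hPS
    have hne : PS.Nonempty := ⟨0, ∅, by simp⟩
    have hbdd : BddAbove PS := by
      refine ⟨M₂, ?_⟩
      rintro s ⟨F, hF, rfl⟩
      exact hbd F hF
    obtain ⟨s, ⟨F, hFΓ, rfl⟩, hs⟩ :=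
      exists_lt_of_lt_csSup hne (show sSup PS - η < sSup PS by linarith)
    have htail : ∀ G : Finset (ℝ × ℝ), ↑G ⊆ Γ → Disjoint G F → (∑ p ∈ G, w p) ≤ η := by
      intro G hGΓ hGF
      have h1 : (∑ p ∈ F ∪ G, w p) ≤ sSup PS := by
        refine le_csSup hbdd ⟨F ∪ G, ?_, rfl⟩
        rw [Finset.coe_union]
        exact union_subset hFΓ hGΓ
      rw [Finset.sum_union hGF.symm] at h1
      linarith
    set D : Finset ℝ := F.image Prod.fst ∪ F.image Prod.snd with hD
    have hcover : Bad ⊆ ↑D ∪ ⋃ p ∈ Γ \ ↑F,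
        (Ioo (p.1 - w p / ε) p.1 ∪ Ioo p.2 (p.2 + w p / ε)) := by
      intro t ht
      by_cases htD : t ∈ (D : Set ℝ)
      · exact Or.inl htD
      refine Or.inr ?_
      have hr : ∃ r > (0:ℝ), ∀ v ∈ D, r ≤ |v - t| := by
        by_cases hDne : D.Nonempty
        · refine ⟨min 1 (D.inf' hDne fun v => |v - t|), ?_, ?_⟩
          · refine lt_min one_pos ?_
            rw [Finset.lt_inf'_iff]
            intro v hv
            rw [abs_pos, sub_ne_zero]
            intro hvt
            exact htD (by rw [← hvt] ; exact hv)
          · intro v hv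
            exact le_trans (min_le_right _ _) (Finset.inf'_le _ hv)
        · exact ⟨1, one_pos, fun v hv => absurd ⟨v, hv⟩ hDne⟩
      obtain ⟨r, hr0, hrD⟩ := hr
      obtain ⟨p, hpΓ, hp⟩ := ht r hr0
      have hpF : p ∉ F := by
        intro hpF
        rcases hp with ⟨h1, _⟩ | ⟨h1, _⟩
        · have hmemD : p.1 ∈ D := Finset.mem_union_left _ (Finset.mem_image.2 ⟨p, hpF, rfl⟩)
          have h5 := hrD _ hmemD
          have h4 : |p.1 - t| < r := abs_lt.2 ⟨by linarith [h1.1], by linarith [h1.2]⟩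
          linarith
        · have hmemD : p.2 ∈ D := Finset.mem_union_right _ (Finset.mem_image.2 ⟨p, hpF, rfl⟩)
          have h5 := hrD _ hmemD
          have h4 : |p.2 - t| < r := abs_lt.2 ⟨by linarith [h1.1], by linarith [h1.2]⟩
          linarith
      refine mem_iUnion₂.2 ⟨p, ⟨hpΓ, hpF⟩, ?_⟩
      rcases hp with ⟨h1, h2⟩ | ⟨h1, h2⟩
      · refine Or.inl ⟨?_, h1.1⟩
        have : p.1 - t < w p / ε := by
          rw [lt_div_iff₀ hε]; linarith [h2]
        linarith
      · refine Or.inr ⟨h1.2, ?_⟩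
        have : t - p.2 < w p / ε := by
          rw [lt_div_iff₀ hε]; linarith [h2]
        linarith
    calc volume Bad ≤ volume (↑D ∪ ⋃ p ∈ Γ \ ↑F,
          (Ioo (p.1 - w p / ε) p.1 ∪ Ioo p.2 (p.2 + w p / ε))) := measure_mono hcover
      _ ≤ volume (↑D : Set ℝ) + volume (⋃ p ∈ Γ \ ↑F,
          (Ioo (p.1 - w p / ε) p.1 ∪ Ioo p.2 (p.2 + w p / ε))) := measure_union_le _ _
      _ ≤ 0 + ENNReal.ofReal (2 * η / ε) := by
        gcongr
        · exact le_of_eq (D.finite_toSet.measure_zero _)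
        · have hcount2 : (Γ \ ↑F).Countable := hcount.mono diff_subset
          refine le_trans (measure_biUnion_le volume hcount2 _) ?_
          have hterm : ∀ p : ↥(Γ \ ↑F), volume ((Ioo (p.1.1 - w p.1 / ε) p.1.1 ∪
              Ioo p.1.2 (p.1.2 + w p.1 / ε))) ≤ ENNReal.ofReal (2 * w p.1 / ε) := by
            rintro ⟨p, hp⟩
            refine le_trans (measure_union_le _ _) ?_
            simp only [Real.volume_Ioo]
            have hw0 : 0 ≤ w p / ε := div_nonneg (hw p hp.1) hε.le
            rw [show p.1 - (p.1 - w p / ε) = w p / ε by ring,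
              show p.2 + w p / ε - p.2 = w p / ε by ring,
              show 2 * w p / ε = w p / ε + w p / ε by ring,
              ENNReal.ofReal_add hw0 hw0]
          refine le_trans (ENNReal.tsum_le_tsum hterm) ?_
          rw [ENNReal.tsum_eq_iSup_sum]
          refine iSup_le fun s => ?_
          set G : Finset (ℝ × ℝ) := s.image Subtype.val with hG
          have hGΓ : ↑G ⊆ Γ := by
            intro p hp
            simp only [hG, Finset.coe_image, Set.mem_image] at hp
            obtain ⟨q, _, rfl⟩ := hp
            exact q.2.1
          have hGF : Disjoint G F := by
            rw [Finset.disjoint_left]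
            intro p hp
            simp only [hG, Finset.mem_image] at hp
            obtain ⟨q, _, rfl⟩ := hp
            exact fun h => q.2.2 h
          have hsum : (∑ q ∈ s, ENNReal.ofReal (2 * w q.1 / ε)) =
              ENNReal.ofReal (∑ q ∈ s, 2 * w q.1 / ε) := by
            rw [ENNReal.ofReal_sum_of_nonneg]
            intro q _
            have := hw q.1 q.2.1
            positivity
          rw [hsum]
          refine ENNReal.ofReal_le_ofReal ?_
          have h1 : (∑ q ∈ s, 2 * w q.1 / ε) = (2 / ε) * ∑ p ∈ G, w p := by
            rw [hG, Finset.sum_image (fun x _ y _ h => Subtype.ext h), Finset.mul_sum]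
            refine Finset.sum_congr rfl fun q _ => by ring
          rw [h1]
          rw [show 2 * η / ε = (2 / ε) * η by ring]
          have h2 := htail G hGΓ hGF
          have h3 : (0:ℝ) ≤ 2 / ε := by positivity
          nlinarith
      _ = ENNReal.ofReal (2 * η / ε) := by rw [zero_add]
  refine le_antisymm ?_ zero_le
  refine ENNReal.le_of_forall_pos_le_add (fun ν hν _ => ?_)
  rw [zero_add]
  have h1 := key (ε * ν / 2) (by positivity)
  refine le_trans h1 ?_
  rw [show 2 * (ε * ν / 2) / ε = (ν : ℝ) by field_simp]
  rw [ENNReal.ofReal_coe_nnreal]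

lemma subfamilyP_exists (F : Finset (ℝ × ℝ)) :
    ∃ (m : ℕ) (e : Fin m → ℝ × ℝ), Function.Injective e ∧ (∀ j, e j ∈ F) ∧
      (∀ g : ℝ × ℝ → ℝ, (∑ j, g (e j)) = ∑ p ∈ F, g p) := by
  refine ⟨F.card, fun j => (F.equivFin.symm j : ℝ × ℝ), ?_, ?_, ?_⟩
  · intro i j hij
    exact F.equivFin.symm.injective (Subtype.ext hij)
  · intro j; exact (F.equivFin.symm j).2
  · intro g
    rw [← Finset.sum_attach F g]
    exact (Fintype.sum_equiv F.equivFin.symm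
      (fun j => g ((F.equivFin.symm j : ℝ × ℝ))) (fun p => g p) (fun j => rfl)).symm ▸
      (Equiv.sum_comp F.equivFin.symm (fun p => g (p : ℝ × ℝ)))

lemma ae_diff_of_acstar {φ : ℝ → ℝ} {a b : ℝ} {E : Set ℝ} (hab : a ≤ b)
    (hφ : ContinuousOn φ (Icc a b)) (hE : E ⊆ Icc a b) (hAC : FnACstar φ E) :
    ∀ᵐ t ∂(volume : Measure ℝ), t ∈ E → DifferentiableAt ℝ φ t := by
  classical
  rcases E.eq_empty_or_nonempty with rfl | hEne
  · filter_upwards with t ht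
    exact absurd ht (notMem_empty t)
  obtain ⟨C, hC⟩ := isCompact_Icc.exists_bound_of_continuousOn hφ
  simp only [Real.norm_eq_abs] at hC
  obtain ⟨M, hM0⟩ := vbstar_of_acstar hab hφ hE hAC
  set K : Set ℝ := closure E with hK
  have hMK : MyVB φ K M := vbstar_closure hab hφ hE hM0
  have hKsub : K ⊆ Icc a b := closure_minimal hE isClosed_Icc
  have hKne : K.Nonempty := hEne.closure
  have hKc : IsClosed K := isClosed_closure
  have hKbb : BddBelow K := (bddBelow_Icc : BddBelow (Icc a b)).mono hKsub
  have hKba : BddAbove K := (bddAbove_Icc (a := a) (b := b)).mono hKsub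
  set α : ℝ := sInf K with hαdef
  set β : ℝ := sSup K with hβdef
  have hαK : α ∈ K := hKc.csInf_mem hKne hKbb
  have hβK : β ∈ K := hKc.csSup_mem hKne hKba
  -- the gaps
  set Γ : Set (ℝ × ℝ) :=
    {p | p.1 ∈ K ∧ p.2 ∈ K ∧ p.1 < p.2 ∧ Ioo p.1 p.2 ∩ K = ∅} with hΓ
  have hdisj : ∀ p ∈ Γ, ∀ q ∈ Γ, p ≠ q → p.2 ≤ q.1 ∨ q.2 ≤ p.1 := by
    intro p hp q hq hpq
    by_contra hcon
    push_neg at hcon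
    obtain ⟨h1, h2⟩ := hcon
    have e1 : p.1 = q.1 := by
      rcases lt_trichotomy p.1 q.1 with h | h | h
      · exfalso
        have : q.1 ∈ Ioo p.1 p.2 ∩ K := ⟨⟨h, h1⟩, hq.1⟩
        rw [hp.2.2.2] at this
        exact this
      · exact h
      · exfalso
        have : p.1 ∈ Ioo q.1 q.2 ∩ K := ⟨⟨h, h2⟩, hp.1⟩
        rw [hq.2.2.2] at this
        exact this
    have e2 : p.2 = q.2 := by
      rcases lt_trichotomy p.2 q.2 with h | h | h
      · exfalso
        have : p.2 ∈ Ioo q.1 q.2 ∩ K := ⟨⟨h1, h⟩, hp.2.1⟩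
        rw [hq.2.2.2] at this
        exact this
      · exact h
      · exfalso
        have : q.2 ∈ Ioo p.1 p.2 ∩ K := ⟨⟨h2, h⟩, hq.2.1⟩
        rw [hp.2.2.2] at this
        exact this
    exact hpq (Prod.ext e1 e2)
  have hΓcount : Γ.Countable := by
    rw [Set.countable_iff_exists_injective]
    refine ⟨fun p => Encodable.encode (exists_rat_btwn p.2.2.2.1).choose, ?_⟩
    intro p q hpq
    simp only at hpq
    have hpq2 := Encodable.encode_injective hpq
    by_contra hne
    have hne2 : (p : ℝ × ℝ) ≠ q := fun h => hne (Subtype.ext h)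
    have hp := (exists_rat_btwn (p.2.2.2.1)).choose_spec
    have hq := (exists_rat_btwn (q.2.2.2.1)).choose_spec
    rw [hpq2] at hp
    rcases hdisj p p.2 q q.2 hne2 with h | h
    · have := hp.2
      have := hq.1
      have : ((p.1).2 : ℝ) ≤ (q.1).1 := h
      linarith [hp.2, hq.1]
    · linarith [hp.1, hq.2, show ((q.1).2 : ℝ) ≤ (p.1).1 from h]
  have hsubΓ : ∀ p ∈ Γ, Icc p.1 p.2 ⊆ Icc a b := by
    intro p hp
    exact Icc_subset_Icc (hKsub hp.1).1 (hKsub hp.2.1).2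
  obtain ⟨w, hwnn, hwge, hbd⟩ : ∃ w : ℝ × ℝ → ℝ, (∀ p ∈ Γ, 0 ≤ w p) ∧
      (∀ p ∈ Γ, osc φ p.1 p.2 ≤ w p ∧ p.2 - p.1 ≤ w p) ∧
      (∀ F : Finset (ℝ × ℝ), ↑F ⊆ Γ → (∑ p ∈ F, w p) ≤ M + (b - a)) := by
    refine ⟨fun p => osc φ p.1 p.2 + (p.2 - p.1), ?_, ?_, ?_⟩
    · intro p hp
      have h1 := osc_nonneg hC (hsubΓ p hp) hp.2.2.1.le
      have h2 := hp.2.2.1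
      show (0:ℝ) ≤ osc φ p.1 p.2 + (p.2 - p.1)
      linarith
    · intro p hp
      have h1 := osc_nonneg hC (hsubΓ p hp) hp.2.2.1.le
      have h2 := hp.2.2.1
      simp only
      constructor <;> linarith
    · intro F hFΓ
      obtain ⟨m, e, hinj, hmem, hsum⟩ := subfamilyP_exists F
      have hmemΓ : ∀ j, e j ∈ Γ := fun j => hFΓ (hmem j)
      have hgood : GoodIntervals K (fun j => (e j).1) (fun j => (e j).2) := by
        constructor
        · intro j
          exact ⟨(hmemΓ j).1, (hmemΓ j).2.1, (hmemΓ j).2.2.1.le⟩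
        · intro i j hij
          exact hdisj _ (hmemΓ i) _ (hmemΓ j) (fun h => hij (hinj h))
      have h1 : (∑ j, osc φ (e j).1 (e j).2) ≤ M := hMK m _ _ hgood
      have h2 : (∑ j, ((e j).2 - (e j).1)) ≤ b - a :=
        sum_len_le hab (fun j => (hmemΓ j).2.2.1.le)
          (fun i j hij => hdisj _ (hmemΓ i) _ (hmemΓ j) (fun h => hij (hinj h)))
          (fun j => ⟨(hKsub (hmemΓ j).1).1, (hKsub (hmemΓ j).2.1).2⟩)
      have h3 := hsum (fun p => osc φ p.1 p.2 + (p.2 - p.1))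
      rw [← h3]
      show (∑ j, (osc φ (e j).1 (e j).2 + ((e j).2 - (e j).1))) ≤ M + (b - a)
      rw [Finset.sum_add_distrib]
      exact add_le_add h1 h2
  have hEK : E ⊆ K := subset_closure
  -- a.e. differentiability within K
  have hBV : BoundedVariationOn φ K := by
    have hle : eVariationOn φ K ≤ ENNReal.ofReal M := by
      refine iSup_le ?_
      rintro ⟨m, u, hu, hus⟩
      have hgood : GoodIntervals K (fun i : Fin m => u i.1) (fun i : Fin m => u (i.1 + 1)) := by
        constructor
        · exact fun i => ⟨hus i.1, hus (i.1 + 1), hu (Nat.le_succ i.1)⟩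
        · intro i j hij
          rcases lt_or_gt_of_ne hij with h | h
          · exact Or.inl (hu (Nat.succ_le_of_lt h))
          · exact Or.inr (hu (Nat.succ_le_of_lt h))
      have hreal : (∑ i ∈ Finset.range m, |φ (u (i + 1)) - φ (u i)|) ≤ M := by
        rw [Finset.sum_range fun i => |φ (u (i + 1)) - φ (u i)|]
        calc (∑ i : Fin m, |φ (u (i.1 + 1)) - φ (u i.1)|)
            ≤ ∑ i : Fin m, osc φ (u i.1) (u (i.1 + 1)) := by
              refine Finset.sum_le_sum fun i _ => ?_
              refine abs_le_osc hC ?_ le_rfl (hu (Nat.le_succ i.1)) le_rfl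
              exact Icc_subset_Icc (hKsub (hus i.1)).1 (hKsub (hus (i.1 + 1))).2
          _ ≤ M := hMK m _ _ hgood
      calc (∑ i ∈ Finset.range m, edist (φ (u (i + 1))) (φ (u i)))
          = ∑ i ∈ Finset.range m, ENNReal.ofReal |φ (u (i + 1)) - φ (u i)| := by
            refine Finset.sum_congr rfl fun i _ => ?_
            rw [edist_dist, Real.dist_eq]
        _ = ENNReal.ofReal (∑ i ∈ Finset.range m, |φ (u (i + 1)) - φ (u i)|) :=
            (ENNReal.ofReal_sum_of_nonneg fun i _ => abs_nonneg _).symm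
        _ ≤ ENNReal.ofReal M := ENNReal.ofReal_le_ofReal hreal
    exact ne_top_of_le_ne_top ENNReal.ofReal_ne_top hle
  have h1 : ∀ᵐ t ∂(volume : Measure ℝ), t ∈ K → DifferentiableWithinAt ℝ φ K t :=
    hBV.locallyBoundedVariationOn.ae_differentiableWithinAt_of_mem
  set EP : Set ℝ := (fun p : ℝ × ℝ => p.1) '' Γ ∪ (fun p : ℝ × ℝ => p.2) '' Γ with hEP
  have hEPc : EP.Countable := (hΓcount.image _).union (hΓcount.image _)
  have h2 : ∀ᵐ t ∂(volume : Measure ℝ), t ∉ EP :=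
    measure_eq_zero_iff_ae_notMem.1 (hEPc.measure_zero _)
  have h3 : ∀ᵐ t ∂(volume : Measure ℝ), ∀ j : ℕ, ¬ (∀ r > 0, ∃ p ∈ Γ,
      (p.1 ∈ Ioo t (t + r) ∧ (1 / (j + 1) : ℝ) * (p.1 - t) < w p) ∨
      (p.2 ∈ Ioo (t - r) t ∧ (1 / (j + 1) : ℝ) * (t - p.2) < w p)) := by
    rw [ae_all_iff]
    intro j
    have hεj : (0:ℝ) < 1 / (j + 1) := by positivity
    have := bad_null Γ hΓcount w hwnn (M + (b - a)) hbd hεj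
    exact measure_eq_zero_iff_ae_notMem.1 this
  have h4 : ∀ᵐ t ∂(volume : Measure ℝ), t ∉ ({α, β} : Set ℝ) :=
    measure_eq_zero_iff_ae_notMem.1 ((Set.finite_singleton β |>.insert α).measure_zero _)
  filter_upwards [h1, h2, h3, h4] with t ht1 ht2 ht3 ht4 htE
  have htK : t ∈ K := hEK htE
  simp only [Set.mem_insert_iff, Set.mem_singleton_iff, not_or] at ht4
  have hαt : α < t := (csInf_le hKbb htK).lt_of_ne (fun h => ht4.1 h.symm)
  have htβ : t < β := (le_csSup hKba htK).lt_of_ne (fun h => ht4.2 h)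
  have hW : DifferentiableWithinAt ℝ φ K t := ht1 htK
  set L : ℝ := derivWithin φ K t with hLdef
  have hDW : HasDerivWithinAt φ L K t := hW.hasDerivWithinAt
  clear hLdef
  clear_value L
  suffices hDA : HasDerivAt φ L t from hDA.differentiableAt
  rw [hasDerivAt_iff_isLittleO, Asymptotics.isLittleO_iff]
  intro cε hcε
  have hlo := hasDerivWithinAt_iff_isLittleO.1 hDW
  have hin := Asymptotics.isLittleO_iff.1 hlo (half_pos hcε)
  rw [eventually_nhdsWithin_iff, Metric.eventually_nhds_iff] at hin
  obtain ⟨r₁, hr₁, hin⟩ := hin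
  obtain ⟨j, hj⟩ := exists_nat_one_div_lt (show (0:ℝ) < cε / (2 * (1 + |L|)) by positivity)
  have hBj := ht3 j
  push_neg at hBj
  obtain ⟨r₂, hr₂0, hnb⟩ := hBj
  rw [Metric.eventually_nhds_iff]
  refine ⟨min (min r₁ r₂) (min (t - α) (β - t)),
    lt_min (lt_min hr₁ hr₂0) (lt_min (by linarith) (by linarith)), fun x hx => ?_⟩
  rw [Real.dist_eq] at hx
  have hxr₁ : |x - t| < r₁ := hx.trans_le ((min_le_left _ _).trans (min_le_left _ _))
  have hxr₂ : |x - t| < r₂ := hx.trans_le ((min_le_left _ _).trans (min_le_right _ _))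
  have hxα : α < x := by
    have := hx.trans_le ((min_le_right _ _).trans (min_le_left _ _))
    rw [abs_lt] at this; linarith
  have hxβ : x < β := by
    have := hx.trans_le ((min_le_right _ _).trans (min_le_right _ _))
    rw [abs_lt] at this; linarith
  simp only [Real.norm_eq_abs, smul_eq_mul]
  by_cases hxK : x ∈ K
  · have := hin (by rwa [Real.dist_eq]) hxK
    simp only [Real.norm_eq_abs, smul_eq_mul] at this
    have h0 : (0:ℝ) ≤ |x - t| := abs_nonneg _
    have h5 : cε / 2 * |x - t| ≤ cε * |x - t| :=
      mul_le_mul_of_nonneg_right (half_le_self hcε.le) h0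
    linarith
  · have hxt : x ≠ t := fun h => hxK (h ▸ htK)
    set cc : ℝ := sSup (K ∩ Iic x) with hccdef
    set dd : ℝ := sInf (K ∩ Ici x) with hdddef
    have h_ne1 : (K ∩ Iic x).Nonempty := ⟨α, hαK, hxα.le⟩
    have h_ba1 : BddAbove (K ∩ Iic x) := ⟨x, fun y hy => hy.2⟩
    have hccm : cc ∈ K ∩ Iic x := (hKc.inter isClosed_Iic).csSup_mem h_ne1 h_ba1
    have hccx : cc < x := hccm.2.lt_of_ne (fun h => hxK (h ▸ hccm.1))
    have h_ne2 : (K ∩ Ici x).Nonempty := ⟨β, hβK, hxβ.le⟩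
    have h_bb2 : BddBelow (K ∩ Ici x) := ⟨x, fun y hy => hy.2⟩
    have hddm : dd ∈ K ∩ Ici x := (hKc.inter isClosed_Ici).csInf_mem h_ne2 h_bb2
    have hxdd : x < dd := (hddm.2.lt_of_ne' (fun h => hxK (h ▸ hddm.1)))
    have hgapped : Ioo cc dd ∩ K = ∅ := by
      ext y
      simp only [mem_inter_iff, mem_Ioo, mem_empty_iff_false, iff_false, not_and]
      rintro ⟨hy1, hy2⟩ hyK
      rcases le_total y x with h | h
      · exact absurd (le_csSup h_ba1 ⟨hyK, h⟩) (not_le.2 hy1)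
      · exact absurd (csInf_le h_bb2 ⟨hyK, h⟩) (not_le.2 hy2)
    have hpΓ : (cc, dd) ∈ Γ := ⟨hccm.1, hddm.1, hccx.trans hxdd, hgapped⟩
    have hccub : ∀ y ∈ K ∩ Iic x, y ≤ cc := fun y hy => le_csSup h_ba1 hy
    have hddlb : ∀ y ∈ K ∩ Ici x, dd ≤ y := fun y hy => csInf_le h_bb2 hy
    clear hccdef hdddef
    clear_value cc dd
    have hoscw : osc φ cc dd ≤ w (cc, dd) := (hwge _ hpΓ).1
    have hlenw : dd - cc ≤ w (cc, dd) := (hwge _ hpΓ).2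
    have hwnn2 := hwnn _ hpΓ
    have hLnn : (0:ℝ) < 1 + |L| := by positivity
    have hjle : (1:ℝ) / (j + 1) * (2 * (1 + |L|)) ≤ cε := by
      rw [lt_div_iff₀ (by positivity : (0:ℝ) < 2 * (1 + |L|))] at hj
      linarith [hj]
    rcases lt_or_gt_of_ne hxt with hlt | hgt
    · -- x < t : use right endpoint dd of the gap
      have htdd : dd ≤ t := hddlb t ⟨htK, hlt.le⟩
      have htne : dd ≠ t := by
        intro h
        exact ht2 (Or.inr ⟨(cc, dd), hpΓ, h⟩)
      have hddt : dd < t := htdd.lt_of_ne htne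
      have hddI : dd ∈ Ioo (t - r₂) t := by
        constructor
        · have : t - x ≤ |x - t| := by rw [abs_sub_comm]; exact le_abs_self _
          linarith
        · exact hddt
      have hwle : w (cc, dd) ≤ (1 / (j + 1) : ℝ) * (t - dd) := (hnb (cc, dd) hpΓ).2 hddI
      have hdd1 : dist dd t < r₁ := by
        rw [Real.dist_eq, abs_of_neg (by linarith : dd - t < 0)]
        have h10 : t - x ≤ |x - t| := by rw [abs_sub_comm]; exact le_abs_self _
        linarith
      have hinc := hin hdd1 hddm.1
      simp only [Real.norm_eq_abs, smul_eq_mul] at hinc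
      rw [abs_of_neg (show dd - t < 0 by linarith)] at hinc
      have hosc : |φ x - φ dd| ≤ osc φ cc dd := by
        have := abs_le_osc hC (hsubΓ _ hpΓ) (c := cc) (d := dd) (x := x) (y := dd)
          hccx.le hxdd.le le_rfl
        rwa [abs_sub_comm]
      have hlen : dd - x ≤ w (cc, dd) := by linarith
      have keyeq : φ x - φ t - (x - t) * L =
          (φ x - φ dd) + (φ dd - φ t - (dd - t) * L) + (dd - x) * L := by ring
      have htri : |φ x - φ t - (x - t) * L| ≤
          |φ x - φ dd| + |φ dd - φ t - (dd - t) * L| + (dd - x) * |L| := by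
        rw [keyeq]
        refine le_trans (abs_add_le _ _) ?_
        have h6 : |(dd - x) * L| = (dd - x) * |L| := by
          rw [abs_mul, abs_of_pos (by linarith : (0:ℝ) < dd - x)]
        refine add_le_add (abs_add_le _ _) h6.le
      have hWk : (1 + |L|) * w (cc, dd) ≤ (cε / 2) * (t - dd) := by
        have h7 : (1 + |L|) * w (cc, dd) ≤ (1 + |L|) * ((1 / (j + 1) : ℝ) * (t - dd)) :=
          mul_le_mul_of_nonneg_left hwle hLnn.le
        have h9 : (0:ℝ) ≤ t - dd := by linarith
        have h10 : (1 + |L|) * (1 / (j + 1) : ℝ) ≤ cε / 2 := by linarith only [hjle]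
        have h8 : (1 + |L|) * ((1 / (j + 1) : ℝ) * (t - dd)) ≤ (cε / 2) * (t - dd) := by
          rw [show (1 + |L|) * ((1 / (j + 1) : ℝ) * (t - dd)) =
            ((1 + |L|) * (1 / (j + 1) : ℝ)) * (t - dd) by ring]
          exact mul_le_mul_of_nonneg_right h10 h9
        linarith only [h7, h8]
      have habs : |x - t| = t - x := by rw [abs_sub_comm, abs_of_pos (by linarith)]
      have hL0 : (0:ℝ) ≤ |L| := abs_nonneg _
      rw [habs]
      have hm1 : (dd - x) * |L| ≤ w (cc, dd) * |L| := mul_le_mul_of_nonneg_right hlen hL0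
      have hm2 : cε * (t - dd) ≤ cε * (t - x) :=
        mul_le_mul_of_nonneg_left (by linarith) hcε.le
      have hexp : (1 + |L|) * w (cc, dd) = w (cc, dd) + w (cc, dd) * |L| := by ring
      have hexp2 : cε * (t - dd) = (cε / 2) * (t - dd) + (cε / 2) * (t - dd) := by ring
      linarith only [htri, hosc, hoscw, hinc, hWk, hm1, hm2, hexp, hexp2]
    · -- x > t : use left endpoint cc of the gap
      have htcc : t ≤ cc := hccub t ⟨htK, hgt.le⟩
      have htne : t ≠ cc := by
        intro h
        exact ht2 (Or.inl ⟨(cc, dd), hpΓ, h.symm⟩)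
      have htcc2 : t < cc := htcc.lt_of_ne htne
      have hccI : cc ∈ Ioo t (t + r₂) := by
        constructor
        · exact htcc2
        · have : x - t ≤ |x - t| := le_abs_self _
          linarith
      have hwle : w (cc, dd) ≤ (1 / (j + 1) : ℝ) * (cc - t) := (hnb (cc, dd) hpΓ).1 hccI
      have hcc1 : dist cc t < r₁ := by
        rw [Real.dist_eq, abs_of_pos (by linarith : (0:ℝ) < cc - t)]
        have h10 : x - t ≤ |x - t| := le_abs_self _
        linarith
      have hinc := hin hcc1 hccm.1
      simp only [Real.norm_eq_abs, smul_eq_mul] at hinc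
      rw [abs_of_pos (show (0:ℝ) < cc - t by linarith)] at hinc
      have hosc : |φ x - φ cc| ≤ osc φ cc dd :=
        abs_le_osc hC (hsubΓ _ hpΓ) (c := cc) (d := dd) (x := cc) (y := x)
          le_rfl hccx.le hxdd.le
      have hlen : x - cc ≤ w (cc, dd) := by linarith
      have keyeq : φ x - φ t - (x - t) * L =
          (φ x - φ cc) + (φ cc - φ t - (cc - t) * L) + (cc - x) * L := by ring
      have htri : |φ x - φ t - (x - t) * L| ≤
          |φ x - φ cc| + |φ cc - φ t - (cc - t) * L| + (x - cc) * |L| := by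
        rw [keyeq]
        refine le_trans (abs_add_le _ _) ?_
        have h6 : |(cc - x) * L| = (x - cc) * |L| := by
          rw [abs_mul, abs_of_neg (by linarith : cc - x < 0)]
          ring
        refine add_le_add (abs_add_le _ _) h6.le
      have hWk : (1 + |L|) * w (cc, dd) ≤ (cε / 2) * (cc - t) := by
        have h7 : (1 + |L|) * w (cc, dd) ≤ (1 + |L|) * ((1 / (j + 1) : ℝ) * (cc - t)) :=
          mul_le_mul_of_nonneg_left hwle hLnn.le
        have h9 : (0:ℝ) ≤ cc - t := by linarith
        have h10 : (1 + |L|) * (1 / (j + 1) : ℝ) ≤ cε / 2 := by linarith only [hjle]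
        have h8 : (1 + |L|) * ((1 / (j + 1) : ℝ) * (cc - t)) ≤ (cε / 2) * (cc - t) := by
          rw [show (1 + |L|) * ((1 / (j + 1) : ℝ) * (cc - t)) =
            ((1 + |L|) * (1 / (j + 1) : ℝ)) * (cc - t) by ring]
          exact mul_le_mul_of_nonneg_right h10 h9
        linarith only [h7, h8]
      have habs : |x - t| = x - t := abs_of_pos (by linarith)
      have hL0 : (0:ℝ) ≤ |L| := abs_nonneg _
      rw [habs]
      have hm1 : (x - cc) * |L| ≤ w (cc, dd) * |L| := mul_le_mul_of_nonneg_right hlen hL0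
      have hm2 : cε * (cc - t) ≤ cε * (x - t) :=
        mul_le_mul_of_nonneg_left (by linarith) hcε.le
      have hexp : (1 + |L|) * w (cc, dd) = w (cc, dd) + w (cc, dd) * |L| := by ring
      have hexp2 : cε * (cc - t) = (cε / 2) * (cc - t) + (cε / 2) * (cc - t) := by ring
      linarith only [htri, hosc, hoscw, hinc, hWk, hm1, hm2, hexp, hexp2]

end Proofs

/-- An ACG* function on `[a,b]` is differentiable almost everywhere on `[a,b]`. -/
theorem stmt5 (φ : ℝ → ℝ) (a b : ℝ) (hab : a ≤ b)
    (h : FnACGstar φ a b) :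
    ∀ᵐ t ∂(MeasureTheory.volume.restrict (Set.Icc a b)),
      DifferentiableAt ℝ φ t := by
  obtain ⟨hφ, S, hS, hACs⟩ := h
  have key : ∀ n : ℕ, ∀ᵐ t ∂(volume : Measure ℝ), t ∈ S n → DifferentiableAt ℝ φ t := by
    intro n
    refine ae_diff_of_acstar hab hφ ?_ (hACs n)
    intro x hx
    rw [← hS]
    exact Set.mem_iUnion.2 ⟨n, hx⟩
  have key2 := MeasureTheory.ae_all_iff.2 key
  have key3 : ∀ᵐ t ∂(volume : Measure ℝ), t ∈ Set.Icc a b → DifferentiableAt ℝ φ t := by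
    filter_upwards [key2] with t ht htI
    rw [← hS] at htI
    obtain ⟨n, hn⟩ := Set.mem_iUnion.1 htI
    exact ht n hn
  exact (MeasureTheory.ae_restrict_iff' measurableSet_Icc).2 key3
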